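/- arXiv:1704.04332 — 2 statements merged into one kernel-verified Lean document; each statement's English description precedes it below -/
import Mathlib

section
/- Let a <= b be real numbers, let p : I -> R be a finite family of points with p(i) in the closed interval [a, b] for all i in I, let w : I -> R be nonnegative weights with total weight W equal to the sum of w(i) over i in I, and let r be a real number with (b-a)/2 <= r <= b-a. Then there exists c with a <= c and c + r <= b such that the sum of w(i) over those i with p(i) in the closed interval [c, c+r] is at least W/2. -/
/-- Single-sensor half-weight claim: for weighted points in `[a, b]` and a
covering range `r` with `(b-a)/2 ≤ r ≤ b-a`, some subinterval `[c, c+r]` of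
`[a, b]` covers at least half the total weight. -/
theorem stmt5 {I : Type*} [Fintype I] (a b : ℝ) (hab : a ≤ b)
    (p : I → ℝ) (hp : ∀ i, p i ∈ Set.Icc a b)
    (w : I → ℝ) (hw : ∀ i, 0 ≤ w i) (W : ℝ) (hW : W = ∑ i, w i)
    (r : ℝ) (hr1 : (b - a) / 2 ≤ r) (hr2 : r ≤ b - a) :
    ∃ c : ℝ, a ≤ c ∧ c + r ≤ b ∧
      W / 2 ≤ ∑ i ∈ Finset.univ.filter (fun i => p i ∈ Set.Icc c (c + r)), w i := by
  classical
  set S1 := Finset.univ.filter (fun i => p i ∈ Set.Icc a (a + r)) with hS1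
  set S2 := Finset.univ.filter (fun i => p i ∈ Set.Icc (b - r) ((b - r) + r)) with hS2
  have hunion : S1 ∪ S2 = Finset.univ := by
    ext i
    simp only [hS1, hS2, Finset.mem_union, Finset.mem_filter, Finset.mem_univ, true_and,
      Set.mem_Icc, Finset.mem_univ, iff_true]
    obtain ⟨h1, h2⟩ := hp i
    by_cases h : p i ≤ a + r
    · exact Or.inl ⟨h1, h⟩
    · right
      constructor
      · linarith
      · linarith
  have hsum : W ≤ ∑ i ∈ S1, w i + ∑ i ∈ S2, w i := by
    have := Finset.sum_union_inter (s₁ := S1) (s₂ := S2) (f := w)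
    have hle : ∑ i ∈ S1 ∪ S2, w i ≤ ∑ i ∈ S1 ∪ S2, w i + ∑ i ∈ S1 ∩ S2, w i := by
      have : 0 ≤ ∑ i ∈ S1 ∩ S2, w i := Finset.sum_nonneg fun i _ => hw i
      linarith
    rw [hunion] at *
    linarith [this, hle, hW]
  by_cases h : W / 2 ≤ ∑ i ∈ S1, w i
  · exact ⟨a, le_refl a, by linarith, h⟩
  · refine ⟨b - r, by linarith, by linarith, by linarith⟩
end

section
/- Let v > 0, T > 0 and L > 0 be real numbers and let f : R -> R be Lipschitz with constant v. Suppose that for every real t there exist u1 and u2 with t <= u1 <= t + T, t <= u2 <= t + T, f(u1) = 0 and f(u2) = L. Then L <= v*T/2. -/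
/-- The covering range of a single sensor with maximum speed `v` and sweep
period `T` is at most `v*T/2`: if a `v`-Lipschitz trajectory `f` visits both
`0` and `L` within every time window of length `T`, then `L ≤ v*T/2`. -/
theorem stmt17 (v T L : ℝ) (hv : 0 < v) (hT : 0 < T) (hL : 0 < L)
    (f : ℝ → ℝ) (hlip : ∀ s t : ℝ, |f s - f t| ≤ v * |s - t|)
    (hvisit : ∀ t : ℝ, (∃ u1, t ≤ u1 ∧ u1 ≤ t + T ∧ f u1 = 0) ∧
                        (∃ u2, t ≤ u2 ∧ u2 ≤ t + T ∧ f u2 = L)) :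
    L ≤ v * T / 2 := by
  by_contra h
  push_neg at h
  obtain ⟨⟨a, _, _, ha⟩, _⟩ := hvisit 0
  have hTlt : T < 2 * L / v := by
    rw [lt_div_iff₀ hv]; nlinarith
  set ε := (2 * L / v - T) / 2 with hε
  have hεpos : 0 < ε := by rw [hε]; linarith
  obtain ⟨_, u2, ht1, ht2, hu2⟩ := hvisit (a - L / v + ε)
  have habs := hlip u2 a
  rw [hu2, ha, sub_zero, abs_of_pos hL] at habs
  have hεT : ε + T = L / v + (T / 2 - (2 * L / v - T) / 2 + ε) := by rw [hε]; ring
  have h1 : |u2 - a| ≤ L / v - ε := by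
    rw [abs_le]
    constructor
    · linarith
    · have : u2 ≤ a - L / v + ε + T := ht2
      nlinarith [hε]
  have h2 : v * |u2 - a| ≤ v * (L / v - ε) := by
    exact mul_le_mul_of_nonneg_left h1 hv.le
  have h3 : v * (L / v - ε) = L - v * ε := by field_simp
  nlinarith [mul_pos hv hεpos]
end
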